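/- Let A be a symmetric negative definite m×m matrix, and let λ* = −λ_max(A) > 0 be the best possible Euclidean contraction rate of x' = Ax. For any symmetric positive definite M and λ > 0 with MA + AᵀM ⪯ −2λM, one has λ ≤ λ*. Moreover, the metric M = −(1/2)A⁻¹ achieves MA + AᵀM ⪯ −2λ*·M. -/

import Mathlib

open scoped Matrix

theorem optimal_contraction_rate_symmetric {m : ℕ} [NeZero m]
    (A : Matrix (Fin m) (Fin m) ℝ) (hA : A.IsHermitian) (hAneg : (-A).PosDef)
    (lamStar : ℝ) (hlamStar : lamStar = -(⨆ i, hA.eigenvalues i)) :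
    (∀ (M : Matrix (Fin m) (Fin m) ℝ) (lam : ℝ), M.PosDef → 0 < lam →
        (-(2 * lam) • M - (M * A + Aᵀ * M)).PosSemidef → lam ≤ lamStar) ∧
      ((-(2 * lamStar)) • (-(1 / 2 : ℝ) • A⁻¹) -
        ((-(1 / 2 : ℝ) • A⁻¹) * A + Aᵀ * (-(1 / 2 : ℝ) • A⁻¹))).PosSemidef := by
  have hAT : Aᵀ = A := by
    ext i j
    simpa using congrFun (congrFun hA.eq i) j
  have hev : ∀ i, hA.eigenvalues i < 0 := by
    intro i
    set v : Fin m → ℝ := ⇑(hA.eigenvectorBasis i) with hvdef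
    have hv : A *ᵥ v = hA.eigenvalues i • v := hA.mulVec_eigenvectorBasis i
    have hvne : v ≠ 0 := by
      have := hA.eigenvectorBasis.orthonormal.ne_zero i
      intro h; apply this; ext j; exact congrFun h j
    have hpos := hAneg.dotProduct_mulVec_pos hvne
    have hstar : star v = v := by simp
    rw [hstar, Matrix.neg_mulVec, hv] at hpos
    have hdd : 0 ≤ v ⬝ᵥ v := Finset.sum_nonneg fun j _ => mul_self_nonneg _
    simp only [dotProduct_neg, dotProduct_smul, smul_eq_mul] at hpos
    nlinarith
  constructor
  · -- optimality
    intro M lam hM hlam hPSD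
    obtain ⟨i0, hi0⟩ := exists_eq_ciSup_of_finite (f := hA.eigenvalues)
    set μ := hA.eigenvalues i0 with hμ
    set v : Fin m → ℝ := ⇑(hA.eigenvectorBasis i0) with hvdef
    have hv : A *ᵥ v = μ • v := hA.mulVec_eigenvectorBasis i0
    have hvne : v ≠ 0 := by
      have := hA.eigenvectorBasis.orthonormal.ne_zero i0
      intro h; apply this; ext j; exact congrFun h j
    have hstar : star v = v := by simp
    have hc : 0 < v ⬝ᵥ (M *ᵥ v) := by
      have := hM.dotProduct_mulVec_pos hvne; rwa [hstar] at this
    have h0 := hPSD.dotProduct_mulVec_nonneg v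
    rw [hstar] at h0
    have key : v ⬝ᵥ ((-(2 * lam) • M - (M * A + Aᵀ * M)) *ᵥ v)
        = (-(2 * lam) - 2 * μ) * (v ⬝ᵥ (M *ᵥ v)) := by
      rw [Matrix.sub_mulVec, Matrix.add_mulVec, Matrix.smul_mulVec,
        ← Matrix.mulVec_mulVec, hv, Matrix.mulVec_smul, ← Matrix.mulVec_mulVec]
      rw [dotProduct_sub, dotProduct_add, dotProduct_smul,
        dotProduct_smul]
      have h2 : v ⬝ᵥ (Aᵀ *ᵥ (M *ᵥ v)) = μ * (v ⬝ᵥ (M *ᵥ v)) := by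
        rw [Matrix.dotProduct_mulVec, Matrix.vecMul_transpose, hv]
        simp [smul_dotProduct]
      rw [h2]
      ring_nf
    rw [key] at h0
    have hμs : μ = -lamStar := by rw [hlamStar, ← hi0, neg_neg]
    nlinarith
  · -- achievability
    have hdet : IsUnit A.det := by
      rw [hA.det_eq_prod_eigenvalues]
      refine isUnit_iff_ne_zero.mpr (Finset.prod_ne_zero_iff.mpr fun i _ => ?_)
      exact ne_of_lt (hev i)
    set U : Matrix (Fin m) (Fin m) ℝ := (hA.eigenvectorUnitary : Matrix (Fin m) (Fin m) ℝ)
      with hU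
    have hUU : U * star U = 1 := Matrix.mem_unitaryGroup_iff.mp hA.eigenvectorUnitary.2
    have hUU' : star U * U = 1 := Matrix.mem_unitaryGroup_iff'.mp hA.eigenvectorUnitary.2
    have hspec : A = U * Matrix.diagonal hA.eigenvalues * star U := by
      have := hA.spectral_theorem
      simpa using this
    set B : Matrix (Fin m) (Fin m) ℝ :=
      U * Matrix.diagonal (fun i => (hA.eigenvalues i)⁻¹) * star U with hB
    have hBA : B * A = 1 := by
      have key : B * (U * Matrix.diagonal hA.eigenvalues * star U) = 1 := by
        rw [hB]
        rw [Matrix.mul_assoc, Matrix.mul_assoc, ← Matrix.mul_assoc (star U),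
          ← Matrix.mul_assoc (star U), hUU', one_mul, ← Matrix.mul_assoc, ← Matrix.mul_assoc,
          Matrix.mul_assoc _ _ (Matrix.diagonal hA.eigenvalues), Matrix.diagonal_mul_diagonal]
        have h9 : (fun i => (hA.eigenvalues i)⁻¹ * hA.eigenvalues i) = fun _ => (1:ℝ) := by
          funext i; exact inv_mul_cancel₀ (ne_of_lt (hev i))
        rw [h9, Matrix.diagonal_one, mul_one, hUU]
      rwa [← hspec] at key
    have hAinv : A⁻¹ = B := Matrix.inv_eq_left_inv hBA
    have hE : (-(2 * lamStar)) • (-(1 / 2 : ℝ) • A⁻¹) -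
        ((-(1 / 2 : ℝ) • A⁻¹) * A + Aᵀ * (-(1 / 2 : ℝ) • A⁻¹)) = lamStar • A⁻¹ + 1 := by
      rw [hAT, Matrix.smul_mul, Matrix.mul_smul, Matrix.nonsing_inv_mul A hdet,
        Matrix.mul_nonsing_inv A hdet, smul_smul]
      rw [show -(2 * lamStar) * -(1 / 2 : ℝ) = lamStar by ring]
      module
    rw [hE, hAinv]
    have hd : lamStar • (Matrix.diagonal fun i => (hA.eigenvalues i)⁻¹)
        + (1 : Matrix (Fin m) (Fin m) ℝ)
        = Matrix.diagonal (fun i => lamStar * (hA.eigenvalues i)⁻¹ + 1) := by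
      ext i j
      by_cases h : i = j <;>
        simp [Matrix.diagonal_apply, Matrix.one_apply, h]
    have heq : lamStar • B + 1 =
        U * Matrix.diagonal (fun i => lamStar * (hA.eigenvalues i)⁻¹ + 1) * star U := by
      rw [← hd, hB, Matrix.mul_add, Matrix.add_mul, mul_one, hUU, Matrix.mul_smul,
        Matrix.smul_mul]
    rw [heq]
    have hdiag : (Matrix.diagonal (fun i => lamStar * (hA.eigenvalues i)⁻¹ + 1)).PosSemidef := by
      refine Matrix.posSemidef_diagonal_iff.mpr fun i => ?_
      have h1 : hA.eigenvalues i ≤ ⨆ j, hA.eigenvalues j := le_ciSup (f := hA.eigenvalues) (Finite.bddAbove_range _) i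
      have h2 : lamStar ≤ -hA.eigenvalues i := by rw [hlamStar]; linarith
      have h3 := hev i
      have h4 : hA.eigenvalues i * (hA.eigenvalues i)⁻¹ = 1 := mul_inv_cancel₀ (ne_of_lt h3)
      have h5 : (hA.eigenvalues i)⁻¹ < 0 := inv_lt_zero.mpr h3
      nlinarith
    have hfin := hdiag.mul_mul_conjTranspose_same U
    rwa [← Matrix.star_eq_conjTranspose] at hfin
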